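/- Let F be a finite subset of ℤ² with nonincreasing row sums (r_i) and column sums (c_j), and let F₁ be its uniquely determined neighbour (the set {(i,j) : 1 ≤ j ≤ r_i}). Then there exists a sequence of sets F₁ = G₀, G₁, …, G_α = G, where α = (1/2)Σ_j |c_j − v_j| with v_j = #{l : r_l ≥ j}, such that each G_{t} is obtained from G_{t−1} by moving a single element within its row (deleting (l, j) and adding (l, i) for some row l and columns j ≠ i), all G_t have row sums (r_i), and G has column sums (c_j). -/

import Mathlib

open Finset

/-- Number of elements of `F` in row `i`. -/
def rowSum (F : Finset (ℤ × ℤ)) (i : ℤ) : ℕ := (F.filter fun p => p.1 = i).card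

/-- Number of elements of `F` in column `j`. -/
def colSum (F : Finset (ℤ × ℤ)) (j : ℤ) : ℕ := (F.filter fun p => p.2 = j).card

/-- `F` has row sums `r` on rows `1..m`, column sums `c` on columns `1..n`,
and zero line sums elsewhere. -/
def hasLineSums (F : Finset (ℤ × ℤ)) (m n : ℕ) (r : Fin m → ℕ) (c : Fin n → ℕ) : Prop :=
  (∀ i : Fin m, rowSum F ((i : ℤ) + 1) = r i) ∧
  (∀ i : ℤ, (∀ k : Fin m, (k : ℤ) + 1 ≠ i) → rowSum F i = 0) ∧
  (∀ j : Fin n, colSum F ((j : ℤ) + 1) = c j) ∧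
  (∀ j : ℤ, (∀ k : Fin n, (k : ℤ) + 1 ≠ j) → colSum F j = 0)

/-- The conjugate partition: `conj m r j = #{l : r l ≥ j}`. -/
def conj (m : ℕ) (r : Fin m → ℕ) (j : ℕ) : ℕ := (Finset.univ.filter fun l => j ≤ r l).card


lemma colSum_insert (p : ℤ × ℤ) (s : Finset (ℤ × ℤ)) (hp : p ∉ s) (y : ℤ) :
    colSum (insert p s) y = colSum s y + if p.2 = y then 1 else 0 := by
  unfold colSum
  rw [Finset.filter_insert]
  split_ifs with h
  · rw [Finset.card_insert_of_notMem (fun hmem => hp (Finset.mem_of_mem_filter p hmem))]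
  · rfl

lemma rowSum_insert (p : ℤ × ℤ) (s : Finset (ℤ × ℤ)) (hp : p ∉ s) (x : ℤ) :
    rowSum (insert p s) x = rowSum s x + if p.1 = x then 1 else 0 := by
  unfold rowSum
  rw [Finset.filter_insert]
  split_ifs with h
  · rw [Finset.card_insert_of_notMem (fun hmem => hp (Finset.mem_of_mem_filter p hmem))]
  · rfl

lemma colSum_erase_add (p : ℤ × ℤ) (s : Finset (ℤ × ℤ)) (hp : p ∈ s) (y : ℤ) :
    colSum s y = colSum (s.erase p) y + if p.2 = y then 1 else 0 := by
  conv_lhs => rw [← Finset.insert_erase hp]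
  exact colSum_insert p _ (Finset.notMem_erase p s) y

lemma rowSum_erase_add (p : ℤ × ℤ) (s : Finset (ℤ × ℤ)) (hp : p ∈ s) (x : ℤ) :
    rowSum s x = rowSum (s.erase p) x + if p.1 = x then 1 else 0 := by
  conv_lhs => rw [← Finset.insert_erase hp]
  exact rowSum_insert p _ (Finset.notMem_erase p s) x

lemma rowSum_move (H : Finset (ℤ × ℤ)) (l j i : ℤ) (hj : (l, j) ∈ H) (hi : (l, i) ∉ H) (x : ℤ) :
    rowSum (insert (l, i) (H.erase (l, j))) x = rowSum H x := by
  rw [rowSum_insert _ _ (fun h => hi (Finset.mem_of_mem_erase h)) x,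
      rowSum_erase_add (l, j) H hj x]

lemma colSum_move (H : Finset (ℤ × ℤ)) (l j i : ℤ) (hj : (l, j) ∈ H) (hi : (l, i) ∉ H) (y : ℤ) :
    (colSum (insert (l, i) (H.erase (l, j))) y : ℤ)
      = (colSum H y : ℤ) + (if i = y then 1 else 0) - (if j = y then 1 else 0) := by
  rw [colSum_insert _ _ (fun h => hi (Finset.mem_of_mem_erase h)) y,
      colSum_erase_add (l, j) H hj y]
  simp only []
  split_ifs <;> push_cast <;> ring

lemma mem_col {n : ℕ} {H : Finset (ℤ × ℤ)}
    (hout : ∀ y : ℤ, (∀ k : Fin n, (k : ℤ) + 1 ≠ y) → colSum H y = 0)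
    {p : ℤ × ℤ} (hp : p ∈ H) : ∃ k : Fin n, (k : ℤ) + 1 = p.2 := by
  by_contra h
  push_neg at h
  have h0 := hout p.2 h
  unfold colSum at h0
  rw [Finset.card_eq_zero] at h0
  have : p ∈ H.filter (fun q => q.2 = p.2) := Finset.mem_filter.mpr ⟨hp, rfl⟩
  simp [h0] at this

lemma mem_row {m : ℕ} {H : Finset (ℤ × ℤ)}
    (hout : ∀ x : ℤ, (∀ k : Fin m, (k : ℤ) + 1 ≠ x) → rowSum H x = 0)
    {p : ℤ × ℤ} (hp : p ∈ H) : ∃ k : Fin m, (k : ℤ) + 1 = p.1 := by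
  by_contra h
  push_neg at h
  have h0 := hout p.1 h
  unfold rowSum at h0
  rw [Finset.card_eq_zero] at h0
  have : p ∈ H.filter (fun q => q.1 = p.1) := Finset.mem_filter.mpr ⟨hp, rfl⟩
  simp [h0] at this

lemma card_eq_of_rowSum_eq (H F : Finset (ℤ × ℤ)) (h : ∀ x, rowSum H x = rowSum F x) :
    H.card = F.card := by
  classical
  have covH : ∀ p ∈ H, p.1 ∈ (H ∪ F).image Prod.fst :=
    fun p hp => Finset.mem_image.mpr ⟨p, Finset.mem_union_left _ hp, rfl⟩
  have covF : ∀ p ∈ F, p.1 ∈ (H ∪ F).image Prod.fst :=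
    fun p hp => Finset.mem_image.mpr ⟨p, Finset.mem_union_right _ hp, rfl⟩
  rw [Finset.card_eq_sum_card_fiberwise covH, Finset.card_eq_sum_card_fiberwise covF]
  exact Finset.sum_congr rfl fun x _ => h x

lemma inj_cast_add_one {n : ℕ} : Function.Injective (fun j : Fin n => (j : ℤ) + 1) := by
  intro a b hab
  simp only [add_left_inj, Int.natCast_inj] at hab
  exact Fin.val_injective hab

lemma sum_colSum_prefix {n : ℕ} (H : Finset (ℤ × ℤ))
    (hout : ∀ y : ℤ, (∀ k : Fin n, (k : ℤ) + 1 ≠ y) → colSum H y = 0) (K : Fin n) :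
    ∑ j ∈ Finset.univ.filter (fun j : Fin n => j ≤ K), colSum H ((j : ℤ) + 1)
      = (H.filter fun p => p.2 ≤ (K : ℤ) + 1).card := by
  classical
  have hcov : ∀ p ∈ H.filter (fun p => p.2 ≤ (K : ℤ) + 1),
      p.2 ∈ (Finset.univ.filter (fun j : Fin n => j ≤ K)).image (fun j : Fin n => (j : ℤ) + 1) := by
    intro p hp
    rw [Finset.mem_filter] at hp
    obtain ⟨k, hk⟩ := mem_col hout hp.1
    refine Finset.mem_image.mpr ⟨k, Finset.mem_filter.mpr ⟨Finset.mem_univ _, ?_⟩, hk⟩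
    have h2 := hp.2
    rw [← hk] at h2
    have : (k : ℕ) ≤ (K : ℕ) := by exact_mod_cast by omega
    exact Fin.le_def.mpr this
  rw [Finset.card_eq_sum_card_fiberwise hcov,
      Finset.sum_image (fun a _ b _ h => inj_cast_add_one h)]
  refine Finset.sum_congr rfl fun j hj => ?_
  rw [Finset.mem_filter] at hj
  unfold colSum
  congr 1
  ext p
  simp only [Finset.mem_filter, and_assoc]
  constructor
  · rintro ⟨h1, h3⟩
    refine ⟨h1, ?_, h3⟩
    rw [h3]
    have : (j : ℕ) ≤ (K : ℕ) := hj.2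
    omega
  · rintro ⟨h1, _, h3⟩
    exact ⟨h1, h3⟩

lemma card_eq_sum_colSum {n : ℕ} (H : Finset (ℤ × ℤ))
    (hout : ∀ y : ℤ, (∀ k : Fin n, (k : ℤ) + 1 ≠ y) → colSum H y = 0) :
    H.card = ∑ j : Fin n, colSum H ((j : ℤ) + 1) := by
  classical
  have hcov : ∀ p ∈ H, p.2 ∈ Finset.univ.image (fun j : Fin n => (j : ℤ) + 1) := by
    intro p hp
    obtain ⟨k, hk⟩ := mem_col hout hp
    exact Finset.mem_image.mpr ⟨k, Finset.mem_univ _, hk⟩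
  rw [Finset.card_eq_sum_card_fiberwise hcov,
      Finset.sum_image (fun a _ b _ h => inj_cast_add_one h)]
  rfl

lemma card_eq_sum_rows {m : ℕ} (H S : Finset (ℤ × ℤ)) (hS : S ⊆ H)
    (hout : ∀ x : ℤ, (∀ k : Fin m, (k : ℤ) + 1 ≠ x) → rowSum H x = 0) :
    S.card = ∑ i : Fin m, (S.filter fun p => p.1 = (i : ℤ) + 1).card := by
  classical
  have hcov : ∀ p ∈ S, p.1 ∈ Finset.univ.image (fun i : Fin m => (i : ℤ) + 1) := by
    intro p hp
    obtain ⟨k, hk⟩ := mem_row hout (hS hp)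
    exact Finset.mem_image.mpr ⟨k, Finset.mem_univ _, hk⟩
  rw [Finset.card_eq_sum_card_fiberwise hcov,
      Finset.sum_image (fun a _ b _ h => inj_cast_add_one h)]

lemma key (n : ℕ) (F : Finset (ℤ × ℤ))
    (hcF : ∀ j j' : Fin n, j ≤ j' → colSum F ((j' : ℤ) + 1) ≤ colSum F ((j : ℤ) + 1))
    (hFout : ∀ y : ℤ, (∀ k : Fin n, (k : ℤ) + 1 ≠ y) → colSum F y = 0) :
    ∀ α : ℕ, ∀ H : Finset (ℤ × ℤ),
      (∀ x, rowSum H x = rowSum F x) →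
      (∀ y : ℤ, (∀ k : Fin n, (k : ℤ) + 1 ≠ y) → colSum H y = 0) →
      (∀ K : Fin n, ∑ j ∈ Finset.univ.filter (fun j : Fin n => j ≤ K), colSum F ((j : ℤ) + 1)
          ≤ ∑ j ∈ Finset.univ.filter (fun j : Fin n => j ≤ K), colSum H ((j : ℤ) + 1)) →
      (2 * α = ∑ j : Fin n, ((colSum F ((j : ℤ) + 1) : ℤ) - (colSum H ((j : ℤ) + 1) : ℤ)).natAbs) →
      ∃ G : ℕ → Finset (ℤ × ℤ), G 0 = H ∧
        (∀ t < α, ∃ l j i : ℤ, j ≠ i ∧ (l, j) ∈ G t ∧ (l, i) ∉ G t ∧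
          G (t + 1) = insert (l, i) ((G t).erase (l, j))) ∧
        (∀ t ≤ α, ∀ x : ℤ, rowSum (G t) x = rowSum F x) ∧
        (∀ y : ℤ, colSum (G α) y = colSum F y) := by
  intro α
  induction α with
  | zero =>
    intro H hrow hout _ hα
    refine ⟨fun _ => H, rfl, fun t ht => absurd ht (by omega), fun t _ x => hrow x, ?_⟩
    intro y
    show colSum H y = colSum F y
    by_cases hy : ∃ k : Fin n, (k : ℤ) + 1 = y
    · obtain ⟨k, hk⟩ := hy
      subst hk
      have h0 : ∀ j ∈ (Finset.univ : Finset (Fin n)),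
          ((colSum F ((j : ℤ) + 1) : ℤ) - (colSum H ((j : ℤ) + 1) : ℤ)).natAbs = 0 := by
        intro j _
        have := hα
        have hsum : ∑ j : Fin n, ((colSum F ((j : ℤ) + 1) : ℤ) - (colSum H ((j : ℤ) + 1) : ℤ)).natAbs = 0 := by omega
        exact Finset.sum_eq_zero_iff.mp hsum j (Finset.mem_univ j)
      have := h0 k (Finset.mem_univ k)
      omega
    · push_neg at hy
      rw [hout y hy, hFout y hy]
  | succ α ih =>
    intro H hrow hout hpre hα
    -- some column differs
    have hne : (Finset.univ.filter fun j : Fin n => colSum F ((j : ℤ) + 1) ≠ colSum H ((j : ℤ) + 1)).Nonempty := by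
      by_contra h
      rw [Finset.not_nonempty_iff_eq_empty, Finset.filter_eq_empty_iff] at h
      have hz : ∑ j : Fin n, ((colSum F ((j : ℤ) + 1) : ℤ) - (colSum H ((j : ℤ) + 1) : ℤ)).natAbs = 0 := by
        apply Finset.sum_eq_zero
        intro j hj
        have := h hj
        simp only [ne_eq, not_not] at this
        rw [this]
        simp
      omega
    set J : Fin n := (Finset.univ.filter fun j : Fin n => colSum F ((j : ℤ) + 1) ≠ colSum H ((j : ℤ) + 1)).min' hne with hJ
    have hJD : colSum F ((J : ℤ) + 1) ≠ colSum H ((J : ℤ) + 1) := by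
      have := Finset.min'_mem (Finset.univ.filter fun j : Fin n => colSum F ((j : ℤ) + 1) ≠ colSum H ((j : ℤ) + 1)) hne
      rw [Finset.mem_filter] at this
      exact this.2
    have heqlt : ∀ t : Fin n, t < J → colSum F ((t : ℤ) + 1) = colSum H ((t : ℤ) + 1) := by
      intro t ht
      by_contra hne'
      have : J ≤ t := Finset.min'_le _ t (Finset.mem_filter.mpr ⟨Finset.mem_univ _, hne'⟩)
      exact absurd ht (not_lt.mpr this)
    -- splitting sums at an element
    have split1 : ∀ (s : Finset (Fin n)) (f : Fin n → ℕ) (a : Fin n), a ∈ s →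
        ∑ t ∈ s, f t = f a + ∑ t ∈ s.erase a, f t := by
      intro s f a ha
      exact (Finset.add_sum_erase s f ha).symm
    -- J is a surplus column
    have hwJ : colSum F ((J : ℤ) + 1) < colSum H ((J : ℤ) + 1) := by
      have hp := hpre J
      have hJmem : J ∈ Finset.univ.filter (fun j : Fin n => j ≤ J) :=
        Finset.mem_filter.mpr ⟨Finset.mem_univ _, le_refl _⟩
      rw [split1 _ (fun j => colSum F ((j : ℤ) + 1)) J hJmem, split1 _ (fun j => colSum H ((j : ℤ) + 1)) J hJmem] at hp
      have htail : ∑ t ∈ (Finset.univ.filter (fun j : Fin n => j ≤ J)).erase J, colSum F ((t : ℤ) + 1)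
          = ∑ t ∈ (Finset.univ.filter (fun j : Fin n => j ≤ J)).erase J, colSum H ((t : ℤ) + 1) := by
        apply Finset.sum_congr rfl
        intro t ht
        rw [Finset.mem_erase, Finset.mem_filter] at ht
        exact heqlt t (lt_of_le_of_ne ht.2.2 ht.1)
      omega
    -- totals are equal
    have htot : ∑ j : Fin n, colSum F ((j : ℤ) + 1) = ∑ j : Fin n, colSum H ((j : ℤ) + 1) := by
      rw [← card_eq_sum_colSum F hFout, ← card_eq_sum_colSum H hout,
        card_eq_of_rowSum_eq H F hrow]
    -- a deficit column exists
    have hdefex : (Finset.univ.filter fun i : Fin n => colSum H ((i : ℤ) + 1) < colSum F ((i : ℤ) + 1)).Nonempty := by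
      by_contra h
      rw [Finset.not_nonempty_iff_eq_empty, Finset.filter_eq_empty_iff] at h
      have hle : ∀ i ∈ (Finset.univ : Finset (Fin n)), colSum F ((i : ℤ) + 1) ≤ colSum H ((i : ℤ) + 1) := by
        intro i hi
        have := h hi
        omega
      have := Finset.sum_lt_sum hle ⟨J, Finset.mem_univ J, hwJ⟩
      omega
    set I : Fin n := (Finset.univ.filter fun i : Fin n => colSum H ((i : ℤ) + 1) < colSum F ((i : ℤ) + 1)).min' hdefex with hI
    have hvI : colSum H ((I : ℤ) + 1) < colSum F ((I : ℤ) + 1) := by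
      have := Finset.min'_mem (Finset.univ.filter fun i : Fin n => colSum H ((i : ℤ) + 1) < colSum F ((i : ℤ) + 1)) hdefex
      rw [Finset.mem_filter] at this
      exact this.2
    have hIleast : ∀ t : Fin n, t < I → colSum F ((t : ℤ) + 1) ≤ colSum H ((t : ℤ) + 1) := by
      intro t ht
      by_contra hlt
      have : I ≤ t := Finset.min'_le _ t (Finset.mem_filter.mpr ⟨Finset.mem_univ _, by omega⟩)
      exact absurd ht (not_lt.mpr this)
    have hJI : J < I := by
      have hle : J ≤ I := Finset.min'_le _ I (Finset.mem_filter.mpr ⟨Finset.mem_univ _, by omega⟩)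
      rcases lt_or_eq_of_le hle with h | h
      · exact h
      · exfalso; rw [h] at hwJ; omega
    have hvJI : colSum H ((I : ℤ) + 1) < colSum H ((J : ℤ) + 1) := by
      have := hcF J I (le_of_lt hJI)
      omega
    -- find a row with an element in column J+1 but not I+1
    have hrowex : ∃ l : ℤ, (l, (J : ℤ) + 1) ∈ H ∧ (l, (I : ℤ) + 1) ∉ H := by
      by_contra h
      push_neg at h
      have hle : (H.filter fun p => p.2 = (J : ℤ) + 1).card
          ≤ (H.filter fun p => p.2 = (I : ℤ) + 1).card := by
        apply Finset.card_le_card_of_injOn (fun p => (p.1, (I : ℤ) + 1))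
        · intro p hp
          rw [Finset.mem_coe, Finset.mem_filter] at hp; rw [Finset.mem_coe, Finset.mem_filter]
          refine ⟨h p.1 ?_, rfl⟩
          have : p = (p.1, (J : ℤ) + 1) := by
            rw [← hp.2]
          rw [← this]
          exact hp.1
        · intro p hp q hq hpq
          rw [Finset.coe_filter] at hp hq
          simp only [Set.mem_setOf_eq] at hp hq
          have h1 : p.1 = q.1 := by have := congrArg Prod.fst hpq; simpa using this
          have h2 : p.2 = q.2 := hp.2.trans hq.2.symm
          exact Prod.ext h1 h2
      have hvJc : colSum H ((J : ℤ) + 1) = (H.filter fun p => p.2 = (J : ℤ) + 1).card := rfl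
      have hvIc : colSum H ((I : ℤ) + 1) = (H.filter fun p => p.2 = (I : ℤ) + 1).card := rfl
      omega
    obtain ⟨l, hmem, hnot⟩ := hrowex
    have hJI' : (J : ℤ) + 1 ≠ (I : ℤ) + 1 := by
      intro hc
      exact absurd (inj_cast_add_one hc) (Fin.ne_of_lt hJI)
    set H' : Finset (ℤ × ℤ) := insert (l, (I : ℤ) + 1) (H.erase (l, (J : ℤ) + 1)) with hH'
    have hfne : ∀ t s : Fin n, t ≠ s → (t : ℤ) + 1 ≠ (s : ℤ) + 1 := by
      intro t s hts hc
      exact hts (inj_cast_add_one hc)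
    -- new column sums
    have hv'J : colSum H' ((J : ℤ) + 1) + 1 = colSum H ((J : ℤ) + 1) := by
      have := colSum_move H l ((J : ℤ) + 1) ((I : ℤ) + 1) hmem hnot ((J : ℤ) + 1)
      rw [← hH'] at this
      rw [if_neg (Ne.symm hJI'), if_pos rfl] at this
      omega
    have hv'I : colSum H' ((I : ℤ) + 1) = colSum H ((I : ℤ) + 1) + 1 := by
      have := colSum_move H l ((J : ℤ) + 1) ((I : ℤ) + 1) hmem hnot ((I : ℤ) + 1)
      rw [← hH'] at this
      rw [if_pos rfl, if_neg hJI'] at this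
      omega
    have hv'o : ∀ y : ℤ, y ≠ (J : ℤ) + 1 → y ≠ (I : ℤ) + 1 → colSum H' y = colSum H y := by
      intro y h1 h2
      have := colSum_move H l ((J : ℤ) + 1) ((I : ℤ) + 1) hmem hnot y
      rw [← hH'] at this
      rw [if_neg (Ne.symm h2), if_neg (Ne.symm h1)] at this
      omega
    have hrow' : ∀ x, rowSum H' x = rowSum F x :=
      fun x => (rowSum_move H l _ _ hmem hnot x).trans (hrow x)
    have hout' : ∀ y : ℤ, (∀ k : Fin n, (k : ℤ) + 1 ≠ y) → colSum H' y = 0 := by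
      intro y hy
      rw [hv'o y (Ne.symm (hy J)) (Ne.symm (hy I))]
      exact hout y hy
    -- prefix condition preserved
    have hpre' : ∀ K : Fin n,
        ∑ j ∈ Finset.univ.filter (fun j : Fin n => j ≤ K), colSum F ((j : ℤ) + 1)
          ≤ ∑ j ∈ Finset.univ.filter (fun j : Fin n => j ≤ K), colSum H' ((j : ℤ) + 1) := by
      intro K
      by_cases hKJ : K < J
      · have heq : ∑ j ∈ Finset.univ.filter (fun j : Fin n => j ≤ K), colSum H' ((j : ℤ) + 1)
            = ∑ j ∈ Finset.univ.filter (fun j : Fin n => j ≤ K), colSum H ((j : ℤ) + 1) := by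
          apply Finset.sum_congr rfl
          intro t ht
          rw [Finset.mem_filter] at ht
          exact hv'o _ (hfne t J (by have := ht.2; intro hc; subst hc; omega))
            (hfne t I (by have := ht.2; intro hc; subst hc; have := lt_trans hKJ hJI; omega))
        rw [heq]
        exact hpre K
      · by_cases hKI : K < I
        · -- J ≤ K < I
          have hJK : J ≤ K := not_lt.mp hKJ
          have hJmem : J ∈ Finset.univ.filter (fun j : Fin n => j ≤ K) :=
            Finset.mem_filter.mpr ⟨Finset.mem_univ _, hJK⟩
          have h1 : ∑ j ∈ Finset.univ.filter (fun j : Fin n => j ≤ K), colSum H' ((j : ℤ) + 1) + 1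
              = ∑ j ∈ Finset.univ.filter (fun j : Fin n => j ≤ K), colSum H ((j : ℤ) + 1) := by
            rw [split1 _ (fun j => colSum H' ((j : ℤ) + 1)) J hJmem, split1 _ (fun j => colSum H ((j : ℤ) + 1)) J hJmem]
            have htail : ∑ t ∈ (Finset.univ.filter (fun j : Fin n => j ≤ K)).erase J,
                colSum H' ((t : ℤ) + 1)
                = ∑ t ∈ (Finset.univ.filter (fun j : Fin n => j ≤ K)).erase J, colSum H ((t : ℤ) + 1) := by
              apply Finset.sum_congr rfl
              intro t ht
              rw [Finset.mem_erase, Finset.mem_filter] at ht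
              exact hv'o _ (hfne t J ht.1)
                (hfne t I (by have := ht.2.2; intro hc; subst hc; omega))
            omega
          have h2 : ∑ j ∈ Finset.univ.filter (fun j : Fin n => j ≤ K), colSum F ((j : ℤ) + 1)
              < ∑ j ∈ Finset.univ.filter (fun j : Fin n => j ≤ K), colSum H ((j : ℤ) + 1) := by
            apply Finset.sum_lt_sum
            · intro t ht
              rw [Finset.mem_filter] at ht
              exact hIleast t (lt_of_le_of_lt ht.2 hKI)
            · exact ⟨J, hJmem, hwJ⟩
          omega
        · -- J < I ≤ K
          have hIK : I ≤ K := not_lt.mp hKI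
          have hJmem : J ∈ Finset.univ.filter (fun j : Fin n => j ≤ K) :=
            Finset.mem_filter.mpr ⟨Finset.mem_univ _, le_trans (le_of_lt hJI) hIK⟩
          have hImem : I ∈ (Finset.univ.filter (fun j : Fin n => j ≤ K)).erase J :=
            Finset.mem_erase.mpr ⟨Fin.ne_of_gt hJI,
              Finset.mem_filter.mpr ⟨Finset.mem_univ _, hIK⟩⟩
          have heq : ∑ j ∈ Finset.univ.filter (fun j : Fin n => j ≤ K), colSum H' ((j : ℤ) + 1)
              = ∑ j ∈ Finset.univ.filter (fun j : Fin n => j ≤ K), colSum H ((j : ℤ) + 1) := by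
            rw [split1 _ (fun j => colSum H' ((j : ℤ) + 1)) J hJmem, split1 _ (fun j => colSum H ((j : ℤ) + 1)) J hJmem,
              split1 _ (fun j => colSum H' ((j : ℤ) + 1)) I hImem, split1 _ (fun j => colSum H ((j : ℤ) + 1)) I hImem]
            have htail : ∑ t ∈ ((Finset.univ.filter (fun j : Fin n => j ≤ K)).erase J).erase I,
                colSum H' ((t : ℤ) + 1)
                = ∑ t ∈ ((Finset.univ.filter (fun j : Fin n => j ≤ K)).erase J).erase I, colSum H ((t : ℤ) + 1) := by
              apply Finset.sum_congr rfl
              intro t ht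
              rw [Finset.mem_erase, Finset.mem_erase] at ht
              exact hv'o _ (hfne t J ht.2.1) (hfne t I ht.1)
            omega
          rw [heq]
          exact hpre K
    -- potential decreases by exactly 2
    have hα' : 2 * α = ∑ j : Fin n, ((colSum F ((j : ℤ) + 1) : ℤ) - (colSum H' ((j : ℤ) + 1) : ℤ)).natAbs := by
      have hJmem : J ∈ (Finset.univ : Finset (Fin n)) := Finset.mem_univ J
      have hImem : I ∈ (Finset.univ : Finset (Fin n)).erase J :=
        Finset.mem_erase.mpr ⟨Fin.ne_of_gt hJI, Finset.mem_univ I⟩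
      have e1 : ∑ j : Fin n, ((colSum F ((j : ℤ) + 1) : ℤ) - (colSum H ((j : ℤ) + 1) : ℤ)).natAbs
          = ((colSum F ((J : ℤ) + 1) : ℤ) - (colSum H ((J : ℤ) + 1) : ℤ)).natAbs + (((colSum F ((I : ℤ) + 1) : ℤ) - (colSum H ((I : ℤ) + 1) : ℤ)).natAbs
            + ∑ t ∈ ((Finset.univ : Finset (Fin n)).erase J).erase I,
              ((colSum F ((t : ℤ) + 1) : ℤ) - (colSum H ((t : ℤ) + 1) : ℤ)).natAbs) := by
        rw [split1 _ (fun j => ((colSum F ((j : ℤ) + 1) : ℤ) - (colSum H ((j : ℤ) + 1) : ℤ)).natAbs) J hJmem,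
          split1 _ (fun j => ((colSum F ((j : ℤ) + 1) : ℤ) - (colSum H ((j : ℤ) + 1) : ℤ)).natAbs) I hImem]
      have e2 : ∑ j : Fin n, ((colSum F ((j : ℤ) + 1) : ℤ) - (colSum H' ((j : ℤ) + 1) : ℤ)).natAbs
          = ((colSum F ((J : ℤ) + 1) : ℤ) - (colSum H' ((J : ℤ) + 1) : ℤ)).natAbs
            + (((colSum F ((I : ℤ) + 1) : ℤ) - (colSum H' ((I : ℤ) + 1) : ℤ)).natAbs
            + ∑ t ∈ ((Finset.univ : Finset (Fin n)).erase J).erase I,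
              ((colSum F ((t : ℤ) + 1) : ℤ) - (colSum H' ((t : ℤ) + 1) : ℤ)).natAbs) := by
        rw [split1 _ (fun j => ((colSum F ((j : ℤ) + 1) : ℤ) - (colSum H' ((j : ℤ) + 1) : ℤ)).natAbs) J hJmem,
          split1 _ (fun j => ((colSum F ((j : ℤ) + 1) : ℤ) - (colSum H' ((j : ℤ) + 1) : ℤ)).natAbs) I hImem]
      have htail : ∑ t ∈ ((Finset.univ : Finset (Fin n)).erase J).erase I,
          ((colSum F ((t : ℤ) + 1) : ℤ) - (colSum H' ((t : ℤ) + 1) : ℤ)).natAbs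
          = ∑ t ∈ ((Finset.univ : Finset (Fin n)).erase J).erase I,
            ((colSum F ((t : ℤ) + 1) : ℤ) - (colSum H ((t : ℤ) + 1) : ℤ)).natAbs := by
        apply Finset.sum_congr rfl
        intro t ht
        rw [Finset.mem_erase, Finset.mem_erase] at ht
        rw [hv'o _ (hfne t J ht.2.1) (hfne t I ht.1)]
      rw [e2, htail]
      rw [e1] at hα
      omega
    obtain ⟨G', hG'0, hG'mov, hG'row, hG'col⟩ := ih H' hrow' hout' hpre' hα'
    refine ⟨fun t => match t with | 0 => H | Nat.succ s => G' s, rfl, ?_, ?_, ?_⟩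
    · intro t ht
      match t with
      | 0 =>
        exact ⟨l, (J : ℤ) + 1, (I : ℤ) + 1, hJI', hmem, hnot, hG'0⟩
      | Nat.succ s =>
        obtain ⟨l2, j2, i2, h1, h2, h3, h4⟩ := hG'mov s (by omega)
        exact ⟨l2, j2, i2, h1, h2, h3, h4⟩
    · intro t ht x
      match t with
      | 0 => exact hrow x
      | Nat.succ s => exact hG'row s (by omega) x
    · exact hG'col

theorem stmt14 (m n α : ℕ) (r : Fin m → ℕ) (c : Fin n → ℕ) (F : Finset (ℤ × ℤ))
    (hr : Antitone r) (hc : Antitone c) (hF : hasLineSums F m n r c)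
    (hα : 2 * α = ∑ j : Fin n, ((c j : ℤ) - (conj m r ((j : ℕ) + 1) : ℤ)).natAbs) :
    ∃ G : ℕ → Finset (ℤ × ℤ),
      G 0 = (Finset.Icc (1 : ℤ) (m : ℤ) ×ˢ Finset.Icc (1 : ℤ) (n : ℤ)).filter
        (fun p => ∃ i : Fin m, (i : ℤ) + 1 = p.1 ∧ p.2 ≤ (r i : ℤ)) ∧
      (∀ t < α, ∃ l j i : ℤ, j ≠ i ∧ (l, j) ∈ G t ∧ (l, i) ∉ G t ∧
        G (t + 1) = insert (l, i) ((G t).erase (l, j))) ∧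
      (∀ t ≤ α, ∀ x : ℤ, rowSum (G t) x = rowSum F x) ∧
      (∀ y : ℤ, colSum (G α) y = colSum F y) := by
  obtain ⟨hFr, hFro, hFc, hFco⟩ := hF
  set H0 : Finset (ℤ × ℤ) := (Finset.Icc (1 : ℤ) (m : ℤ) ×ˢ Finset.Icc (1 : ℤ) (n : ℤ)).filter
    (fun p => ∃ i : Fin m, (i : ℤ) + 1 = p.1 ∧ p.2 ≤ (r i : ℤ)) with hH0
  -- row sums of F are at most n
  have hrn : ∀ i : Fin m, r i ≤ n := by
    intro i
    rw [← hFr i]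
    unfold rowSum
    have : (F.filter fun p => p.1 = (i : ℤ) + 1).card
        ≤ (Finset.univ.image fun k : Fin n => (k : ℤ) + 1).card := by
      apply Finset.card_le_card_of_injOn (fun p => p.2)
      · intro p hp
        rw [Finset.mem_coe, Finset.mem_filter] at hp
        obtain ⟨k, hk⟩ := mem_col hFco hp.1
        exact Finset.mem_image.mpr ⟨k, Finset.mem_univ _, hk⟩
      · intro p hp q hq hpq
        rw [Finset.coe_filter] at hp hq
        simp only [Set.mem_setOf_eq] at hp hq
        exact Prod.ext (hp.2.trans hq.2.symm) hpq
    calc (F.filter fun p => p.1 = (i : ℤ) + 1).card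
        ≤ (Finset.univ.image fun k : Fin n => (k : ℤ) + 1).card := this
      _ = n := by rw [Finset.card_image_of_injective _ inj_cast_add_one, Finset.card_univ,
          Fintype.card_fin]
  -- membership in H0
  have hmemH0 : ∀ p : ℤ × ℤ, p ∈ H0 ↔
      ∃ i : Fin m, (i : ℤ) + 1 = p.1 ∧ 1 ≤ p.2 ∧ p.2 ≤ (r i : ℤ) := by
    intro p
    rw [hH0, Finset.mem_filter, Finset.mem_product, Finset.mem_Icc, Finset.mem_Icc]
    constructor
    · rintro ⟨⟨h1, h2⟩, i, hi1, hi2⟩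
      exact ⟨i, hi1, h2.1, hi2⟩
    · rintro ⟨i, hi1, h2, h3⟩
      have hi := i.isLt
      have hrin := hrn i
      refine ⟨⟨⟨by omega, by omega⟩, ⟨h2, by omega⟩⟩, i, hi1, h3⟩
  -- row sums of H0
  have hrowH0 : ∀ x : ℤ, rowSum H0 x = rowSum F x := by
    intro x
    by_cases hx : ∃ i : Fin m, (i : ℤ) + 1 = x
    · obtain ⟨i, hi⟩ := hx
      subst hi
      rw [hFr i]
      unfold rowSum
      have hset : H0.filter (fun p => p.1 = (i : ℤ) + 1)
          = (Finset.Icc (1 : ℤ) (r i : ℤ)).image (fun y => ((i : ℤ) + 1, y)) := by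
        ext p
        rw [Finset.mem_filter, Finset.mem_image, hmemH0 p]
        constructor
        · rintro ⟨⟨i', hi'1, h2, h3⟩, hp1⟩
          have : i' = i := inj_cast_add_one (show ((i' : ℤ) + 1 = (i : ℤ) + 1) by rw [hi'1, hp1])
          subst this
          refine ⟨p.2, Finset.mem_Icc.mpr ⟨h2, h3⟩, ?_⟩
          rw [← hp1]
        · rintro ⟨y, hy, hyp⟩
          rw [Finset.mem_Icc] at hy
          subst hyp
          exact ⟨⟨i, rfl, hy.1, hy.2⟩, rfl⟩
      rw [hset, Finset.card_image_of_injective _ (fun a b hab => by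
        simpa using congrArg Prod.snd hab), Int.card_Icc]
      omega
    · push_neg at hx
      rw [hFro x hx]
      unfold rowSum
      rw [Finset.card_eq_zero, Finset.filter_eq_empty_iff]
      intro p hp
      obtain ⟨i, hi, _, _⟩ := (hmemH0 p).mp hp
      rw [← hi]
      exact hx i
  -- column sums of H0 vanish off 1..n
  have houtH0 : ∀ y : ℤ, (∀ k : Fin n, (k : ℤ) + 1 ≠ y) → colSum H0 y = 0 := by
    intro y hy
    unfold colSum
    rw [Finset.card_eq_zero, Finset.filter_eq_empty_iff]
    intro p hp hpy
    obtain ⟨i, _, h2, h3⟩ := (hmemH0 p).mp hp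
    have hrin := hrn i
    have hk : ((⟨(p.2 - 1).toNat, by omega⟩ : Fin n) : ℤ) + 1 ≠ y := hy _
    simp only [] at hk
    omega
  -- column sums of H0 on 1..n equal the conjugate partition
  have hcolH0 : ∀ j : Fin n, colSum H0 ((j : ℤ) + 1) = conj m r ((j : ℕ) + 1) := by
    intro j
    unfold colSum conj
    have hset : H0.filter (fun p => p.2 = (j : ℤ) + 1)
        = (Finset.univ.filter fun i : Fin m => (j : ℕ) + 1 ≤ r i).image
            (fun i : Fin m => ((i : ℤ) + 1, (j : ℤ) + 1)) := by
      ext p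
      rw [Finset.mem_filter, Finset.mem_image, hmemH0 p]
      constructor
      · rintro ⟨⟨i, hi1, h2, h3⟩, hp2⟩
        refine ⟨i, Finset.mem_filter.mpr ⟨Finset.mem_univ _, by rw [hp2] at h3; omega⟩, ?_⟩
        rw [hi1, ← hp2]
      · rintro ⟨i, hi, hip⟩
        rw [Finset.mem_filter] at hi
        subst hip
        exact ⟨⟨i, rfl, by omega, by have := hi.2; omega⟩, rfl⟩
    rw [hset, Finset.card_image_of_injective _ (fun a b hab =>
      inj_cast_add_one ((Prod.ext_iff.mp hab).1))]
  -- rowSum of H0 vanishes off 1..m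
  have hroutH0 : ∀ x : ℤ, (∀ k : Fin m, (k : ℤ) + 1 ≠ x) → rowSum H0 x = 0 :=
    fun x hx => (hrowH0 x).trans (hFro x hx)
  -- prefix domination (Gale–Ryser)
  have hpreH0 : ∀ K : Fin n,
      ∑ j ∈ Finset.univ.filter (fun j : Fin n => j ≤ K), colSum F ((j : ℤ) + 1)
        ≤ ∑ j ∈ Finset.univ.filter (fun j : Fin n => j ≤ K), colSum H0 ((j : ℤ) + 1) := by
    intro K
    rw [sum_colSum_prefix F hFco K, sum_colSum_prefix H0 houtH0 K]
    rw [card_eq_sum_rows F (F.filter fun p => p.2 ≤ (K : ℤ) + 1) (Finset.filter_subset _ _) hFro,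
      card_eq_sum_rows H0 (H0.filter fun p => p.2 ≤ (K : ℤ) + 1) (Finset.filter_subset _ _)
          hroutH0]
    apply Finset.sum_le_sum
    intro i _
    -- the H0 side equals min (r i) (K+1)
    have hset : (H0.filter fun p => p.2 ≤ (K : ℤ) + 1).filter (fun p => p.1 = (i : ℤ) + 1)
        = (Finset.Icc (1 : ℤ) (min (r i : ℤ) ((K : ℤ) + 1))).image (fun y => ((i : ℤ) + 1, y)) := by
      ext p
      rw [Finset.mem_filter, Finset.mem_filter, Finset.mem_image, hmemH0 p]
      constructor
      · rintro ⟨⟨⟨i', hi'1, h2, h3⟩, hpK⟩, hp1⟩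
        have : i' = i := inj_cast_add_one (show ((i' : ℤ) + 1 = (i : ℤ) + 1) by rw [hi'1, hp1])
        subst this
        refine ⟨p.2, Finset.mem_Icc.mpr ⟨h2, by omega⟩, ?_⟩
        rw [← hp1]
      · rintro ⟨y, hy, hyp⟩
        rw [Finset.mem_Icc] at hy
        subst hyp
        exact ⟨⟨⟨i, rfl, hy.1, by omega⟩, by simp; omega⟩, rfl⟩
    have hH0card : ((H0.filter fun p => p.2 ≤ (K : ℤ) + 1).filter
        (fun p => p.1 = (i : ℤ) + 1)).card = min (r i) ((K : ℕ) + 1) := by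
      rw [hset, Finset.card_image_of_injective _ (fun a b hab => by
        simpa using congrArg Prod.snd hab), Int.card_Icc]
      omega
    rw [hH0card]
    -- the F side is at most r i and at most K+1
    have hb1 : ((F.filter fun p => p.2 ≤ (K : ℤ) + 1).filter
        (fun p => p.1 = (i : ℤ) + 1)).card ≤ r i := by
      rw [← hFr i]
      apply Finset.card_le_card
      intro p hp
      rw [Finset.mem_filter, Finset.mem_filter] at hp
      exact Finset.mem_filter.mpr ⟨hp.1.1, hp.2⟩
    have hb2 : ((F.filter fun p => p.2 ≤ (K : ℤ) + 1).filter
        (fun p => p.1 = (i : ℤ) + 1)).card ≤ (K : ℕ) + 1 := by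
      have hcard : (Finset.Icc (1 : ℤ) ((K : ℤ) + 1)).card = (K : ℕ) + 1 := by
        rw [Int.card_Icc]; omega
      rw [← hcard]
      apply Finset.card_le_card_of_injOn (fun p => p.2)
      · intro p hp
        rw [Finset.mem_coe, Finset.mem_filter, Finset.mem_filter] at hp
        obtain ⟨k, hk⟩ := mem_col hFco hp.1.1
        rw [Finset.mem_coe, Finset.mem_Icc]
        constructor
        · simp only at hk ⊢; omega
        · exact hp.1.2
      · intro p hp q hq hpq
        rw [Finset.coe_filter] at hp hq
        simp only [Set.mem_setOf_eq, Finset.mem_filter] at hp hq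
        exact Prod.ext (hp.2.trans hq.2.symm) hpq
    omega
  -- translate hα
  have hα' : 2 * α = ∑ j : Fin n,
      ((colSum F ((j : ℤ) + 1) : ℤ) - (colSum H0 ((j : ℤ) + 1) : ℤ)).natAbs := by
    rw [hα]
    apply Finset.sum_congr rfl
    intro j _
    rw [hFc j, hcolH0 j]
  have hcF : ∀ j j' : Fin n, j ≤ j' → colSum F ((j' : ℤ) + 1) ≤ colSum F ((j : ℤ) + 1) := by
    intro j j' h
    rw [hFc j, hFc j']
    exact hc h
  obtain ⟨G, hG0, hmov, hrow, hcol⟩ := key n F hcF hFco α H0 hrowH0 houtH0 hpreH0 hα'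
  exact ⟨G, hG0, hmov, hrow, hcol⟩
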